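/- arXiv:1103.0727 — 3 statements merged into one kernel-verified Lean document; each statement's English description precedes it below -/
import Mathlib

section
/- Let a Lie group G act on a symplectic manifold (M, ω) by a strongly Hamiltonian, free and proper action with G-equivariant momentum map J : M → g*, and suppose C = J⁻¹(0) is nonempty. Then C is a coisotropic submanifold of M. -/
open scoped Manifold

theorem stmt6
    {EG : Type*} [NormedAddCommGroup EG] [NormedSpace ℝ EG] [FiniteDimensional ℝ EG]
    {HG : Type*} [TopologicalSpace HG] {IG : ModelWithCorners ℝ EG HG}
    {G : Type*} [TopologicalSpace G] [ChartedSpace HG G] [Group G] [LieGroup IG (⊤ : ℕ∞) G]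
    {E : Type*} [NormedAddCommGroup E] [NormedSpace ℝ E] [FiniteDimensional ℝ E]
    {H : Type*} [TopologicalSpace H] {I : ModelWithCorners ℝ E H}
    {M : Type*} [TopologicalSpace M] [ChartedSpace H M] [IsManifold I (⊤ : ℕ∞) M]
    [MulAction G M]
    (hact : ContMDiff (IG.prod I) I (⊤ : ℕ∞) fun p : G × M => p.1 • p.2)
    (hfree : ∀ (g : G) (p : M), g • p = p → g = 1)
    (hproper : IsProperMap fun p : G × M => (p.2, p.1 • p.2))
    (ω : ∀ p : M, TangentSpace I p →ₗ[ℝ] TangentSpace I p →ₗ[ℝ] ℝ)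
    (hnd : ∀ (p : M) (w : TangentSpace I p), (∀ v : TangentSpace I p, ω p v w = 0) → w = 0)
    (halt : ∀ (p : M) (v w : TangentSpace I p), ω p v w = - ω p w v)
    (hsymp : ∀ (g : G) (p : M) (v w : TangentSpace I p),
      ω (g • p) (mfderiv I I (fun q : M => g • q) p v) (mfderiv I I (fun q : M => g • q) p w)
        = ω p v w)
    (J : M → (EG →L[ℝ] ℝ))
    (hJd : MDifferentiable I 𝓘(ℝ, EG →L[ℝ] ℝ) J)
    (hmom : ∀ (ξ : EG) (p : M) (v : TangentSpace I p),
      ω p ((mfderiv IG I (fun g : G => g • p) (1 : G) ξ : TangentSpace I p)) v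
        = (mfderiv I 𝓘(ℝ, ℝ) (fun q : M => J q ξ) p v : ℝ))
    (ρ : G → ((EG →L[ℝ] ℝ) →ₗ[ℝ] (EG →L[ℝ] ℝ)))
    (hρone : ρ 1 = LinearMap.id)
    (hρmul : ∀ g h : G, ρ (g * h) = (ρ g).comp (ρ h))
    (hequiv : ∀ (g : G) (p : M), J (g • p) = ρ g (J p))
    (hne : ∃ p : M, J p = 0) :
    ∀ p : M, J p = 0 → ∀ w : TangentSpace I p,
      (∀ v : TangentSpace I p,
          (mfderiv I 𝓘(ℝ, EG →L[ℝ] ℝ) J p v : EG →L[ℝ] ℝ) = 0 → ω p v w = 0) →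
      (mfderiv I 𝓘(ℝ, EG →L[ℝ] ℝ) J p w : EG →L[ℝ] ℝ) = 0 := by
  intro p hp w hw
  have hJp : MDifferentiableAt I 𝓘(ℝ, EG →L[ℝ] ℝ) J p := hJd p
  set L := mfderiv I 𝓘(ℝ, EG →L[ℝ] ℝ) J p with hL
  have haux : ∀ (ξ : EG) (v : TangentSpace I p),
      (mfderiv I 𝓘(ℝ, ℝ) (fun q : M => J q ξ) p v : ℝ)
        = ContinuousLinearMap.apply ℝ ℝ ξ (L v) := by
    intro ξ v
    have hcomp := ((ContinuousLinearMap.apply ℝ ℝ ξ).hasMFDerivAt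
      (x := J p)).comp p hJp.hasMFDerivAt
    have hcomp' : HasMFDerivAt I 𝓘(ℝ, ℝ) (fun q : M => J q ξ) p
        ((ContinuousLinearMap.apply ℝ ℝ ξ).comp L) := hcomp
    rw [hcomp'.mfderiv]
    rfl
  have horb : MDifferentiableAt IG I (fun g : G => g • p) (1 : G) := by
    have h1 : ContMDiff IG (IG.prod I) (⊤ : ℕ∞) (fun g : G => ((g, p) : G × M)) :=
      contMDiff_id.prodMk contMDiff_const
    exact ((hact.comp h1).mdifferentiable (by simp)) 1
  have hconst : (J ∘ fun g : G => g • p) = fun _ : G => (0 : EG →L[ℝ] ℝ) := by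
    funext g
    simp [Function.comp, hequiv, hp]
  have hJ1 : HasMFDerivAt I 𝓘(ℝ, EG →L[ℝ] ℝ) J ((1 : G) • p) L := by
    rw [one_smul]; exact hJp.hasMFDerivAt
  have hco : HasMFDerivAt IG 𝓘(ℝ, EG →L[ℝ] ℝ) (J ∘ fun g : G => g • p) 1
      (L.comp (mfderiv IG I (fun g : G => g • p) 1)) :=
    hJ1.comp 1 horb.hasMFDerivAt
  have hzero : L.comp (mfderiv IG I (fun g : G => g • p) 1) = 0 := by
    rw [← hco.mfderiv, hconst, mfderiv_const]; rfl
  have hker : ∀ ξ : EG, L (mfderiv IG I (fun g : G => g • p) (1 : G) ξ) = 0 := by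
    intro ξ
    have h := ContinuousLinearMap.ext_iff.mp hzero ξ
    change L (mfderiv IG I (fun g : G => g • p) (1 : G) ξ) = 0 at h
    simpa using h
  refine ContinuousLinearMap.ext fun ξ => ?_
  have h0 : ω p (mfderiv IG I (fun g : G => g • p) (1 : G) ξ) w = 0 :=
    hw _ (hker ξ)
  rw [hmom, haux] at h0
  exact h0
end

section
/- Let g be a Lie algebra over a commutative ring R containing ℚ, V an R-module, and ρ : g → End(V) a Lie algebra representation. Then the Chevalley–Eilenberg boundary operator ∂ on V ⊗ Λ•g, defined by ∂(v ⊗ ξ₁∧…∧ξₙ) = Σ_j (−1)^{j+1} ρ(ξ_j)v ⊗ ξ₁∧…∧ξ̂_j∧…∧ξₙ + Σ_{i<j} (−1)^{i+j−1} v ⊗ [ξ_i,ξ_j]∧ξ₁∧…∧ξ̂_i∧…∧ξ̂_j∧…∧ξₙ, satisfies ∂² = 0. -/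
open scoped TensorProduct

attribute [local instance 100] LieRing.ofAssociativeRing
open ExteriorAlgebra

noncomputable section CEaux
variable {R : Type*} [CommRing R] {L : Type*} [LieRing L] [LieAlgebra R L]

local notation "E" => ExteriorAlgebra R L

local instance : Module E E := @Semiring.toModule _ inferInstance
local instance : Module Eᵐᵒᵖ E := @Semiring.toOppositeModule _ inferInstance
local instance : SMulCommClass E Eᵐᵒᵖ E :=
  @SMulCommClass.opposite_mid _ _ inferInstance inferInstance inferInstance

def cePhiGen (x : L) : L →ₗ[R] TrivSqZeroExt E E where
  toFun y := TrivSqZeroExt.inl (ι R y) + TrivSqZeroExt.inr (ι R ⁅x, y⁆)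
  map_add' y z := by
    apply TrivSqZeroExt.ext <;>
      simp [TrivSqZeroExt.fst_add, TrivSqZeroExt.snd_add, add_comm, add_left_comm]
  map_smul' r y := by
    apply TrivSqZeroExt.ext <;> simp

theorem cePhiGen_sq (x : L) (y : L) : cePhiGen (R := R) x y * cePhiGen x y = 0 := by
  apply TrivSqZeroExt.ext
  · simp [cePhiGen, TrivSqZeroExt.fst_mul, ι_sq_zero]
  · simp only [cePhiGen, LinearMap.coe_mk, AddHom.coe_mk, TrivSqZeroExt.snd_mul,
      TrivSqZeroExt.fst_add, TrivSqZeroExt.snd_add, TrivSqZeroExt.fst_inl,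
      TrivSqZeroExt.snd_inl, TrivSqZeroExt.fst_inr, TrivSqZeroExt.snd_inr, zero_add, add_zero,
      TrivSqZeroExt.snd_zero, smul_eq_mul, MulOpposite.smul_eq_mul_unop, MulOpposite.unop_op]
    rw [ι_add_mul_swap]

/-- The algebra hom `E → E ⊕ εE` encoding the derivation extending `y ↦ ι ⁅x, y⁆`. -/
def cePhi (x : L) : ExteriorAlgebra R L →ₐ[R] TrivSqZeroExt E E :=
  ExteriorAlgebra.lift R ⟨cePhiGen x, cePhiGen_sq x⟩

theorem cePhi_ι (x y : L) :
    cePhi (R := R) x (ι R y) = TrivSqZeroExt.inl (ι R y) + TrivSqZeroExt.inr (ι R ⁅x, y⁆) := by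
  simp [cePhi, cePhiGen]

theorem cePhi_fst (x : L) (a : E) : (cePhi x a).fst = a := by
  have : (TrivSqZeroExt.fstHom R E E).comp (cePhi x) = AlgHom.id R E := by
    apply ExteriorAlgebra.hom_ext
    ext y
    simp [cePhi_ι]
  exact congrArg (fun f => f a) (congrArg (fun (f : _ →ₐ[R] _) => (f : E → E)) this)


noncomputable def ceTheta (x : L) : E →ₗ[R] E where
  toFun a := (cePhi x a).snd
  map_add' a b := by show ((cePhi x) (a + b)).snd = _; rw [map_add, TrivSqZeroExt.snd_add]
  map_smul' r a := by show ((cePhi x) (r • a)).snd = _; rw [map_smul, TrivSqZeroExt.snd_smul]; rfl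

theorem ceTheta_one (x : L) : ceTheta (R := R) x 1 = 0 := by
  simp [ceTheta]

theorem cePhi_eq (x : L) (a : E) :
    cePhi x a = TrivSqZeroExt.inl a + TrivSqZeroExt.inr (ceTheta x a) := by
  apply TrivSqZeroExt.ext
  · simp [cePhi_fst, TrivSqZeroExt.fst_add]
  · simp [ceTheta, TrivSqZeroExt.snd_add]

theorem ceTheta_ι_mul (x y : L) (a : E) :
    ceTheta x (ι R y * a) = ι R ⁅x, y⁆ * a + ι R y * ceTheta x a := by
  have : cePhi x (ι R y * a) = cePhi x (ι R y) * cePhi x a := map_mul _ _ _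
  rw [cePhi_ι, cePhi_eq] at this
  have h2 := congrArg TrivSqZeroExt.snd this
  simpa [ceTheta, cePhi_fst, TrivSqZeroExt.snd_mul, TrivSqZeroExt.snd_add, TrivSqZeroExt.fst_add,
    MulOpposite.smul_eq_mul_unop, add_comm] using h2

theorem ceTheta_prod (x : L) (m : List L) :
    ceTheta x ((m.map (ι R)).prod) =
      ∑ j ∈ Finset.range m.length, (-1 : ℤ) ^ j •
        (ι R ⁅x, m.getD j 0⁆ * ((m.eraseIdx j).map (ι R)).prod) := by
  induction m with
  | nil => simp [ceTheta_one]
  | cons y m ih =>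
    rw [List.map_cons, List.prod_cons, ceTheta_ι_mul, ih, Finset.mul_sum,
      List.length_cons, Finset.sum_range_succ']
    simp only [List.getD_cons_succ, List.getD_cons_zero, List.eraseIdx_cons_succ,
      List.eraseIdx_cons_zero, List.map_cons, List.prod_cons, pow_succ, pow_zero, one_smul]
    rw [add_comm]
    congr 1
    apply Finset.sum_congr rfl
    intro j _
    rw [mul_smul_comm, ← mul_assoc, ← mul_assoc]
    have h : ι R y * ι R ⁅x, m.getD j 0⁆ = -(ι R ⁅x, m.getD j 0⁆ * ι R y) := by
      rw [eq_neg_iff_add_eq_zero, add_comm, ι_add_mul_swap]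
    rw [h, mul_smul, neg_one_zsmul, neg_mul, smul_neg]

theorem ce_span :
    Submodule.span R (Set.range fun l : List L => (l.map (ι R)).prod) = ⊤ := by
  rw [eq_top_iff]
  rintro a -
  induction a using ExteriorAlgebra.induction with
  | algebraMap r =>
    rw [Algebra.algebraMap_eq_smul_one]
    exact Submodule.smul_mem _ _ (Submodule.subset_span ⟨[], by simp⟩)
  | ι y => exact Submodule.subset_span ⟨[y], by simp⟩
  | add a b ha hb => exact add_mem ha hb
  | mul a b ha hb =>
    have h := Submodule.mul_mem_mul ha hb
    rw [Submodule.span_mul_span] at h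
    refine Submodule.span_le.mpr ?_ h
    rintro _ ⟨_, ⟨l₁, rfl⟩, _, ⟨l₂, rfl⟩, rfl⟩
    exact Submodule.subset_span ⟨l₁ ++ l₂, by simp⟩

theorem ceTheta_bracket (x y : L) :
    ceTheta (R := R) ⁅x, y⁆ = ceTheta x ∘ₗ ceTheta y - ceTheta y ∘ₗ ceTheta x := by
  apply LinearMap.ext_on (ce_span (R := R) (L := L))
  rintro _ ⟨m, rfl⟩
  induction m with
  | nil => simp [ceTheta_one]
  | cons z m ih =>
    simp only [List.map_cons, List.prod_cons, LinearMap.sub_apply, LinearMap.comp_apply] at *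
    simp only [ceTheta_ι_mul, map_add, ih, lie_lie, map_sub, sub_mul, mul_sub]
    abel


variable {V : Type*} [AddCommGroup V] [Module R V]

def ceEps (x : L) : (V ⊗[R] E) →ₗ[R] (V ⊗[R] E) :=
  LinearMap.lTensor V (LinearMap.mulLeft R (ι R x))

def ceL (ρ : L →ₗ⁅R⁆ Module.End R V) (x : L) : (V ⊗[R] E) →ₗ[R] (V ⊗[R] E) :=
  LinearMap.rTensor (ExteriorAlgebra R L) (ρ x) + LinearMap.lTensor V (ceTheta x)

theorem ceEps_tmul (x : L) (v : V) (a : E) : ceEps x (v ⊗ₜ[R] a) = v ⊗ₜ[R] (ι R x * a) := rfl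

theorem ceL_tmul (ρ : L →ₗ⁅R⁆ Module.End R V) (x : L) (v : V) (a : E) :
    ceL ρ x (v ⊗ₜ[R] a) = (ρ x v) ⊗ₜ[R] a + v ⊗ₜ[R] (ceTheta x a) := rfl

theorem ce_ext {P : Type*} [AddCommGroup P] [Module R P] {f g : (V ⊗[R] E) →ₗ[R] P}
    (h : ∀ (v : V) (l : List L),
      f (v ⊗ₜ[R] (l.map (ι R)).prod) = g (v ⊗ₜ[R] (l.map (ι R)).prod)) : f = g := by
  apply TensorProduct.ext
  apply LinearMap.ext; intro v
  apply LinearMap.ext_on (ce_span (R := R) (L := L))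
  rintro _ ⟨l, rfl⟩
  simpa using h v l

theorem ceL_eps (ρ : L →ₗ⁅R⁆ Module.End R V) (x y : L) :
    ceL ρ x ∘ₗ ceEps (V := V) y = ceEps y ∘ₗ ceL ρ x + ceEps ⁅x, y⁆ := by
  apply TensorProduct.ext'
  intro v a
  simp only [LinearMap.comp_apply, LinearMap.add_apply, ceEps_tmul, ceL_tmul,
    ceTheta_ι_mul, map_add, TensorProduct.tmul_add]
  abel

theorem ceL_bracket (ρ : L →ₗ⁅R⁆ Module.End R V) (x y : L) :
    ceL ρ ⁅x, y⁆ = ceL ρ x ∘ₗ ceL ρ y - ceL ρ y ∘ₗ ceL ρ x := by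
  apply TensorProduct.ext'
  intro v a
  have hρ : ρ ⁅x, y⁆ v = ρ x (ρ y v) - ρ y (ρ x v) := by
    rw [LieHom.map_lie]
    rfl
  simp only [LinearMap.comp_apply, LinearMap.sub_apply, ceL_tmul, ceTheta_bracket, hρ,
    LinearMap.sub_apply, LinearMap.comp_apply, map_add, TensorProduct.sub_tmul,
    TensorProduct.tmul_sub]
  abel


theorem ce_homotopy (ρ : L →ₗ⁅R⁆ Module.End R V)
    (D : (V ⊗[R] ExteriorAlgebra R L) →ₗ[R] (V ⊗[R] ExteriorAlgebra R L))
    (hD : ∀ (v : V) (l : List L),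
      D (v ⊗ₜ[R] (l.map fun x => ExteriorAlgebra.ι R x).prod) =
        (∑ j ∈ Finset.range l.length,
          (-1 : ℤ) ^ j • ((ρ (l.getD j 0) v) ⊗ₜ[R]
            ((l.eraseIdx j).map fun x => ExteriorAlgebra.ι R x).prod))
        + ∑ j ∈ Finset.range l.length, ∑ i ∈ Finset.range j,
            (-1 : ℤ) ^ (i + j + 1) • (v ⊗ₜ[R]
              (ExteriorAlgebra.ι R ⁅l.getD i 0, l.getD j 0⁆ *
                (((l.eraseIdx j).eraseIdx i).map fun x => ExteriorAlgebra.ι R x).prod)))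
    (x : L) : D ∘ₗ ceEps x + ceEps x ∘ₗ D = ceL ρ x := by
  apply ce_ext
  intro v m
  simp only [LinearMap.comp_apply, LinearMap.add_apply, ceEps_tmul, ceL_tmul]
  have hx : ι R x * (m.map (ι R)).prod = ((x :: m).map (ι R)).prod := by simp
  rw [hx, hD v (x :: m), hD v m, ceTheta_prod]
  simp only [map_add, map_sum, map_zsmul, ceEps_tmul, List.length_cons,
    TensorProduct.tmul_sum, TensorProduct.tmul_smul]
  rw [Finset.sum_range_succ' _ m.length, Finset.sum_range_succ' _ m.length]
  simp only [Finset.sum_range_succ', List.getD_cons_succ, List.getD_cons_zero,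
    List.eraseIdx_cons_succ, List.eraseIdx_cons_zero, List.map_cons, List.prod_cons,
    Finset.range_zero, Finset.sum_empty, add_zero, zero_add, pow_zero, one_smul]
  have s3 : ∀ (i j : ℕ) (a b : L) (w : E) (u : V),
      ((-1 : ℤ) ^ (i + 1 + (j + 1) + 1)) • (u ⊗ₜ[R] (ι R a * (ι R b * w))) =
        -(((-1 : ℤ) ^ (i + j + 1)) • (u ⊗ₜ[R] (ι R b * (ι R a * w)))) := by
    intro i j a b w u
    have hsw : ι R a * (ι R b * w) = -(ι R b * (ι R a * w)) := by
      rw [← mul_assoc, ← mul_assoc]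
      have h : ι R a * ι R b = -(ι R b * ι R a) := by
        rw [eq_neg_iff_add_eq_zero, ι_add_mul_swap]
      rw [h, neg_mul]
    rw [hsw, TensorProduct.tmul_neg, smul_neg]
    congr 2
    ring
  have s2 : ∀ (j : ℕ) (w : V ⊗[R] E), ((-1 : ℤ) ^ (j + 1 + 1)) • w = ((-1 : ℤ) ^ j) • w := by
    intro j w
    congr 1
    ring
  have s1 : ∀ (j : ℕ) (w : V ⊗[R] E), ((-1 : ℤ) ^ (j + 1)) • w = -(((-1 : ℤ) ^ j) • w) := by
    intro j w
    rw [pow_succ, mul_comm, mul_smul, neg_one_zsmul]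
  simp only [s3]
  simp only [s2]
  simp only [s1]
  simp only [Finset.sum_add_distrib, Finset.sum_neg_distrib]
  abel


variable (ρ : L →ₗ⁅R⁆ Module.End R V)
    (D : (V ⊗[R] ExteriorAlgebra R L) →ₗ[R] (V ⊗[R] ExteriorAlgebra R L))
    (hD : ∀ (v : V) (l : List L),
      D (v ⊗ₜ[R] (l.map fun x => ExteriorAlgebra.ι R x).prod) =
        (∑ j ∈ Finset.range l.length,
          (-1 : ℤ) ^ j • ((ρ (l.getD j 0) v) ⊗ₜ[R]
            ((l.eraseIdx j).map fun x => ExteriorAlgebra.ι R x).prod))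
        + ∑ j ∈ Finset.range l.length, ∑ i ∈ Finset.range j,
            (-1 : ℤ) ^ (i + j + 1) • (v ⊗ₜ[R]
              (ExteriorAlgebra.ι R ⁅l.getD i 0, l.getD j 0⁆ *
                (((l.eraseIdx j).eraseIdx i).map fun x => ExteriorAlgebra.ι R x).prod)))

include hD

theorem ceD_eps (y : L) (u : V ⊗[R] E) :
    D (ceEps y u) = ceL ρ y u - ceEps y (D u) := by
  have h := congrArg (fun f => f u) (ce_homotopy ρ D hD y)
  simp only [LinearMap.comp_apply, LinearMap.add_apply] at h
  rw [← h]
  abel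

theorem ceD_one (v : V) : D (v ⊗ₜ[R] (1 : E)) = 0 := by
  have h := hD v []
  simpa using h

theorem ce_comm (x : L) : ∀ (v : V) (m : List L),
    D (ceL ρ x (v ⊗ₜ[R] (m.map (ι R)).prod)) = ceL ρ x (D (v ⊗ₜ[R] (m.map (ι R)).prod)) := by
  intro v m
  induction m generalizing x with
  | nil =>
    simp only [List.map_nil, List.prod_nil]
    rw [ceD_one ρ D hD, map_zero, ceL_tmul, map_add, ceTheta_one,
      TensorProduct.tmul_zero, map_zero, add_zero, ceD_one ρ D hD]
  | cons y m ih =>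
    have hw : ∀ u : V, u ⊗ₜ[R] ((List.map (ι R) (y :: m)).prod) =
        ceEps y (u ⊗ₜ[R] (List.map (ι R) m).prod) := by
      intro u; rw [ceEps_tmul, List.map_cons, List.prod_cons]
    set w := v ⊗ₜ[R] (List.map (ι R) m).prod with hwdef
    rw [hw]
    have hLε : ∀ u, ceL ρ x (ceEps y u) = ceEps y (ceL ρ x u) + ceEps ⁅x, y⁆ u := by
      intro u
      have h := congrArg (fun f => f u) (ceL_eps ρ x y)
      simpa only [LinearMap.comp_apply, LinearMap.add_apply] using h
    have hbr : ∀ u, ceL ρ ⁅x, y⁆ u = ceL ρ x (ceL ρ y u) - ceL ρ y (ceL ρ x u) := by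
      intro u
      have h := congrArg (fun f => f u) (ceL_bracket ρ x y)
      simpa only [LinearMap.comp_apply, LinearMap.sub_apply] using h
    rw [hLε, map_add, ceD_eps ρ D hD, ceD_eps ρ D hD, ih x, hbr,
      ceD_eps ρ D hD, map_sub, hLε]
    rw [← hwdef]
    abel

theorem ceDD (v : V) (m : List L) :
    D (D (v ⊗ₜ[R] (m.map (ι R)).prod)) = 0 := by
  induction m with
  | nil =>
    simp only [List.map_nil, List.prod_nil]
    rw [ceD_one ρ D hD, map_zero]
  | cons y m ih =>
    have hw : v ⊗ₜ[R] ((List.map (ι R) (y :: m)).prod) =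
        ceEps y (v ⊗ₜ[R] (List.map (ι R) m).prod) := by
      rw [ceEps_tmul, List.map_cons, List.prod_cons]
    rw [hw, ceD_eps ρ D hD, map_sub, ceD_eps ρ D hD, ce_comm ρ D hD y v m, ih, map_zero]
    abel

end CEaux


theorem stmt10 {R : Type*} [CommRing R] [Algebra ℚ R]
    {L : Type*} [LieRing L] [LieAlgebra R L]
    {V : Type*} [AddCommGroup V] [Module R V]
    (ρ : L →ₗ⁅R⁆ Module.End R V)
    (D : (V ⊗[R] ExteriorAlgebra R L) →ₗ[R] (V ⊗[R] ExteriorAlgebra R L))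
    (hD : ∀ (v : V) (l : List L),
      D (v ⊗ₜ[R] (l.map fun x => ExteriorAlgebra.ι R x).prod) =
        (∑ j ∈ Finset.range l.length,
          (-1 : ℤ) ^ j • ((ρ (l.getD j 0) v) ⊗ₜ[R]
            ((l.eraseIdx j).map fun x => ExteriorAlgebra.ι R x).prod))
        + ∑ j ∈ Finset.range l.length, ∑ i ∈ Finset.range j,
            (-1 : ℤ) ^ (i + j + 1) • (v ⊗ₜ[R]
              (ExteriorAlgebra.ι R ⁅l.getD i 0, l.getD j 0⁆ *
                (((l.eraseIdx j).eraseIdx i).map fun x => ExteriorAlgebra.ι R x).prod))) :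
    D ∘ₗ D = 0 := by
  apply ce_ext
  intro v l
  simp only [LinearMap.comp_apply, LinearMap.zero_apply]
  exact ceDD ρ D hD v l
end

section
/- Let π : E → M be a vector bundle of fiber dimension k > 0 and suppose s₁, …, sₙ ∈ Γ∞(E) are smooth sections whose values span each fiber: span_ℝ{s₁(p), …, sₙ(p)} = E_p for all p ∈ M. Then s₁, …, sₙ generate Γ∞(E) as a C∞(M)-module: every smooth section s can be written s = Σᵢ fᵢ sᵢ with fᵢ ∈ C∞(M). -/
open scoped Manifold

open Bundle Set Function

noncomputable section Stmt19Aux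

namespace Stmt19Aux

variable {E G : Type*} [NormedAddCommGroup E] [InnerProductSpace ℝ E]
  [NormedAddCommGroup G] [InnerProductSpace ℝ G]
  [FiniteDimensional ℝ E] [FiniteDimensional ℝ G]

/-- The minimal-norm solution of `C x = v` for a surjective `C`. -/
def sol (C : E →L[ℝ] G) (v : G) : E :=
  (ContinuousLinearMap.adjoint C)
    (Ring.inverse (C ∘L ContinuousLinearMap.adjoint C) v)

theorem isUnit_comp_adjoint (C : E →L[ℝ] G) (hC : Function.Surjective C) :
    IsUnit (C ∘L ContinuousLinearMap.adjoint C) := by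
  rw [ContinuousLinearMap.isUnit_iff_bijective]
  have hker : ∀ d : G, (C ∘L ContinuousLinearMap.adjoint C) d = 0 → d = 0 := by
    intro d hd
    have h1 : (inner ℝ (ContinuousLinearMap.adjoint C d) (ContinuousLinearMap.adjoint C d) : ℝ)
        = 0 := by
      have h2 := ContinuousLinearMap.adjoint_inner_left C (ContinuousLinearMap.adjoint C d) d
      rw [h2, show C (ContinuousLinearMap.adjoint C d) = 0 from hd, inner_zero_right]
    have h3 : ContinuousLinearMap.adjoint C d = 0 := inner_self_eq_zero.mp h1
    obtain ⟨u, hu⟩ := hC d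
    have h4 : (inner ℝ d (C u) : ℝ) = 0 := by
      rw [← ContinuousLinearMap.adjoint_inner_left, h3, inner_zero_left]
    rw [hu] at h4
    exact inner_self_eq_zero.mp h4
  have hinj : Function.Injective ⇑(C ∘L ContinuousLinearMap.adjoint C) := by
    intro a b hab
    have h5 : (C ∘L ContinuousLinearMap.adjoint C) (a - b) = 0 := by
      rw [map_sub, hab, sub_self]
    exact sub_eq_zero.mp (hker _ h5)
  refine ⟨hinj, ?_⟩
  exact (LinearMap.injective_iff_surjective
    (f := ((C ∘L ContinuousLinearMap.adjoint C) : G →ₗ[ℝ] G))).mp hinj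

theorem sol_spec (C : E →L[ℝ] G) (hC : Function.Surjective C) (v : G) : C (sol C v) = v := by
  have h := Ring.mul_inverse_cancel _ (isUnit_comp_adjoint C hC)
  calc C (sol C v)
      = ((C ∘L ContinuousLinearMap.adjoint C) *
          Ring.inverse (C ∘L ContinuousLinearMap.adjoint C)) v := rfl
    _ = (1 : G →L[ℝ] G) v := by rw [h]
    _ = v := rfl

theorem sol_orth (C : E →L[ℝ] G) (v : G) (u : E) (hu : C u = 0) :
    (inner ℝ (sol C v) u : ℝ) = 0 := by
  rw [sol, ContinuousLinearMap.adjoint_inner_left, hu, inner_zero_right]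

end Stmt19Aux

end Stmt19Aux

set_option maxHeartbeats 2000000 in
theorem stmt19
    {EB : Type*} [NormedAddCommGroup EB] [NormedSpace ℝ EB]
    {HB : Type*} [TopologicalSpace HB] {I : ModelWithCorners ℝ EB HB}
    {M : Type*} [TopologicalSpace M] [ChartedSpace HB M] [IsManifold I (⊤ : ℕ∞) M]
    [T2Space M] [SigmaCompactSpace M]
    {F : Type*} [NormedAddCommGroup F] [NormedSpace ℝ F]
    {V : M → Type*} [TopologicalSpace (Bundle.TotalSpace F V)]
    [∀ p, AddCommGroup (V p)] [∀ p, Module ℝ (V p)] [∀ p, TopologicalSpace (V p)]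
    [FiberBundle F V] [VectorBundle ℝ F V] [ContMDiffVectorBundle (⊤ : ℕ∞) F V I]
    (hk : 0 < Module.finrank ℝ F)
    {n : ℕ} (s : Fin n → ∀ p, V p)
    (hsmooth : ∀ i, ContMDiff I (I.prod 𝓘(ℝ, F)) (⊤ : ℕ∞)
      (fun p : M => (⟨p, s i p⟩ : Bundle.TotalSpace F V)))
    (hspan : ∀ p : M, Submodule.span ℝ (Set.range fun i => s i p) = ⊤)
    (t : ∀ p, V p)
    (ht : ContMDiff I (I.prod 𝓘(ℝ, F)) (⊤ : ℕ∞) (fun p : M => (⟨p, t p⟩ : Bundle.TotalSpace F V))) :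
    ∃ f : Fin n → M → ℝ, (∀ i, ContMDiff I 𝓘(ℝ, ℝ) (⊤ : ℕ∞) (f i)) ∧
      ∀ p : M, t p = ∑ i, f i p • s i p := by
  classical
  haveI : FiniteDimensional ℝ F := Module.finite_of_finrank_pos hk
  obtain ⟨ψ⟩ : Nonempty (F ≃L[ℝ] EuclideanSpace ℝ (Fin (Module.finrank ℝ F))) :=
    ⟨ContinuousLinearEquiv.ofFinrankEq (finrank_euclideanSpace_fin (𝕜 := ℝ)).symm⟩
  -- reading sections in the trivialization at `b` is smooth on its base set
  have hsect : ∀ (u : ∀ x, V x), ContMDiff I (I.prod 𝓘(ℝ, F)) (⊤ : ℕ∞)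
      (fun x : M => (⟨x, u x⟩ : Bundle.TotalSpace F V)) →
      ∀ b : M, ∀ q ∈ (trivializationAt F V b).baseSet, ContMDiffAt I 𝓘(ℝ, F) (⊤ : ℕ∞)
        (fun y : M => (trivializationAt F V b (⟨y, u y⟩ : Bundle.TotalSpace F V)).2) q := by
    intro u hu b q hq
    have h1 : ContMDiffAt I 𝓘(ℝ, F) (⊤ : ℕ∞)
        (fun y : M => (trivializationAt F V q (⟨y, u y⟩ : Bundle.TotalSpace F V)).2) q :=
      (Bundle.contMDiffAt_section (s := u) q).mp (hu q)
    rw [← contMDiffWithinAt_univ] at h1 ⊢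
    have hp : ContMDiffWithinAt I I (⊤ : ℕ∞)
        (Bundle.TotalSpace.proj ∘ fun y : M => (⟨y, u y⟩ : Bundle.TotalSpace F V)) univ q :=
      contMDiffWithinAt_id
    refine hp.change_section_trivialization h1 ?_ ?_
    · rw [Trivialization.mem_source]
      exact FiberBundle.mem_baseSet_trivializationAt F V q
    · rw [Trivialization.mem_source]
      exact hq
  -- the coefficient-to-fiber map, read through the trivialization at `b`
  set Cm : M → M → (EuclideanSpace ℝ (Fin n) →L[ℝ] EuclideanSpace ℝ (Fin (Module.finrank ℝ F))) := fun b q =>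
    (ψ : F →L[ℝ] EuclideanSpace ℝ (Fin (Module.finrank ℝ F))) ∘L ∑ i, (EuclideanSpace.proj i).smulRight
      ((trivializationAt F V b (⟨q, s i q⟩ : Bundle.TotalSpace F V)).2) with hCm
  set vg : M → M → EuclideanSpace ℝ (Fin (Module.finrank ℝ F)) := fun b q =>
    ψ ((trivializationAt F V b (⟨q, t q⟩ : Bundle.TotalSpace F V)).2) with hvg
  have hCapp : ∀ b q (c : EuclideanSpace ℝ (Fin n)), Cm b q c
      = ψ (∑ i, c i • (trivializationAt F V b (⟨q, s i q⟩ : Bundle.TotalSpace F V)).2) := by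
    intro b q c
    simp [hCm, ContinuousLinearMap.sum_apply, PiLp.proj_apply]
  -- representation over the base set
  have hrep : ∀ b q (hq : q ∈ (trivializationAt F V b).baseSet) (c : EuclideanSpace ℝ (Fin n)),
      Cm b q c = ψ ((trivializationAt F V b).continuousLinearEquivAt ℝ q hq
        (∑ i, c i • s i q)) := by
    intro b q hq c
    rw [hCapp]
    congr 1
    rw [map_sum]
    refine Finset.sum_congr rfl fun i _ => ?_
    rw [map_smul, Trivialization.continuousLinearEquivAt_apply]
  have hCzero : ∀ b q (hq : q ∈ (trivializationAt F V b).baseSet) (c : EuclideanSpace ℝ (Fin n)),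
      Cm b q c = 0 ↔ (∑ i, c i • s i q) = 0 := by
    intro b q hq c
    rw [hrep b q hq c, ContinuousLinearEquiv.map_eq_zero_iff,
      ContinuousLinearEquiv.map_eq_zero_iff]
  have hvrep : ∀ b q (hq : q ∈ (trivializationAt F V b).baseSet),
      vg b q = ψ ((trivializationAt F V b).continuousLinearEquivAt ℝ q hq (t q)) := by
    intro b q hq
    rw [hvg, Trivialization.continuousLinearEquivAt_apply]
  have hsurj : ∀ b q, q ∈ (trivializationAt F V b).baseSet → Function.Surjective (Cm b q) := by
    intro b q hq v
    have hv : ((trivializationAt F V b).continuousLinearEquivAt ℝ q hq).symm (ψ.symm v) ∈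
        Submodule.span ℝ (Set.range fun i => s i q) := by
      rw [hspan q]; trivial
    rw [Submodule.mem_span_range_iff_exists_fun ℝ] at hv
    obtain ⟨c, hc⟩ := hv
    refine ⟨(WithLp.equiv 2 (Fin n → ℝ)).symm c, ?_⟩
    rw [hrep b q hq]
    have hc' : (∑ i, ((WithLp.equiv 2 (Fin n → ℝ)).symm c) i • s i q)
        = ((trivializationAt F V b).continuousLinearEquivAt ℝ q hq).symm (ψ.symm v) := hc
    rw [hc', ContinuousLinearEquiv.apply_symm_apply, ContinuousLinearEquiv.apply_symm_apply]
  -- the globally defined coefficients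
  set x : M → M → EuclideanSpace ℝ (Fin n) := fun b q => Stmt19Aux.sol (Cm b q) (vg b q) with hx
  -- the solution property
  have hsol1 : ∀ b q (hq : q ∈ (trivializationAt F V b).baseSet),
      (∑ i, x b q i • s i q) = t q := by
    intro b q hq
    have h1 : Cm b q (x b q) = vg b q := Stmt19Aux.sol_spec _ (hsurj b q hq) _
    rw [hrep b q hq, hvrep b q hq] at h1
    have h2 := ψ.injective h1
    exact ((trivializationAt F V b).continuousLinearEquivAt ℝ q hq).injective h2
  have hsol2 : ∀ b q (hq : q ∈ (trivializationAt F V b).baseSet) (u : EuclideanSpace ℝ (Fin n)),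
      (∑ i, u i • s i q) = 0 → (inner ℝ (x b q) u : ℝ) = 0 := by
    intro b q hq u hu
    exact Stmt19Aux.sol_orth _ _ u ((hCzero b q hq u).mpr hu)
  -- uniqueness of the characterized solution
  have huniq : ∀ (q : M) (y z : EuclideanSpace ℝ (Fin n)),
      (∑ i, y i • s i q) = t q → (∀ u : EuclideanSpace ℝ (Fin n), (∑ i, u i • s i q) = 0 → (inner ℝ y u : ℝ) = 0) →
      (∑ i, z i • s i q) = t q → (∀ u : EuclideanSpace ℝ (Fin n), (∑ i, u i • s i q) = 0 → (inner ℝ z u : ℝ) = 0) →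
      y = z := by
    intro q y z hy1 hy2 hz1 hz2
    have hd : (∑ i, (y - z) i • s i q) = 0 := by
      have : ∀ i : Fin n, (y - z) i • s i q = y i • s i q - z i • s i q := by
        intro i
        rw [show (y - z) i = y i - z i from rfl, sub_smul]
      simp_rw [this]
      rw [Finset.sum_sub_distrib, hy1, hz1, sub_self]
    have h1 : (inner ℝ y (y - z) : ℝ) = 0 := hy2 _ hd
    have h2 : (inner ℝ z (y - z) : ℝ) = 0 := hz2 _ hd
    have h3 : (inner ℝ (y - z) (y - z) : ℝ) = 0 := by
      rw [inner_sub_left, h1, h2, sub_self]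
    exact sub_eq_zero.mp (inner_self_eq_zero.mp h3)
  -- coherence: the global solution agrees with the local formula
  have hglue : ∀ b q, q ∈ (trivializationAt F V b).baseSet → x q q = x b q := by
    intro b q hq
    have hq' : q ∈ (trivializationAt F V q).baseSet :=
      FiberBundle.mem_baseSet_trivializationAt F V q
    exact huniq q (x q q) (x b q) (hsol1 q q hq') (hsol2 q q hq') (hsol1 b q hq) (hsol2 b q hq)
  -- smoothness of the local formula
  have hCsm : ∀ b q, q ∈ (trivializationAt F V b).baseSet →
      ContMDiffAt I 𝓘(ℝ, EuclideanSpace ℝ (Fin n) →L[ℝ] EuclideanSpace ℝ (Fin (Module.finrank ℝ F))) (⊤ : ℕ∞) (Cm b) q := by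
    intro b q hq
    refine ContMDiffAt.clm_comp contMDiffAt_const ?_
    refine contMDiffAt_finset_sum fun i _ => ?_
    exact ((ContinuousLinearMap.smulRightL ℝ (EuclideanSpace ℝ (Fin n)) F
      (EuclideanSpace.proj i)).contMDiffAt).comp q (hsect (s i) (hsmooth i) b q hq)
  have hvsm : ∀ b q, q ∈ (trivializationAt F V b).baseSet →
      ContMDiffAt I 𝓘(ℝ, EuclideanSpace ℝ (Fin (Module.finrank ℝ F))) (⊤ : ℕ∞) (vg b) q := by
    intro b q hq
    exact ((ψ : F →L[ℝ] EuclideanSpace ℝ (Fin (Module.finrank ℝ F))).contMDiffAt).comp q (hsect t ht b q hq)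
  -- the adjoint as a continuous linear map
  let adj : (EuclideanSpace ℝ (Fin n) →L[ℝ] EuclideanSpace ℝ (Fin (Module.finrank ℝ F))) →ₗ[ℝ] (EuclideanSpace ℝ (Fin (Module.finrank ℝ F)) →L[ℝ] EuclideanSpace ℝ (Fin n)) :=
    { toFun := ContinuousLinearMap.adjoint
      map_add' := fun A B => by simp [map_add]
      map_smul' := fun r A => by
        simp [map_smulₛₗ, starRingEnd_apply, star_trivial] }
  let adjL : (EuclideanSpace ℝ (Fin n) →L[ℝ] EuclideanSpace ℝ (Fin (Module.finrank ℝ F))) →L[ℝ] (EuclideanSpace ℝ (Fin (Module.finrank ℝ F)) →L[ℝ] EuclideanSpace ℝ (Fin n)) := LinearMap.toContinuousLinearMap adj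
  have hadj : ∀ A : EuclideanSpace ℝ (Fin n) →L[ℝ] EuclideanSpace ℝ (Fin (Module.finrank ℝ F)), adjL A = ContinuousLinearMap.adjoint A := fun A => rfl
  have hxsm : ∀ b q, q ∈ (trivializationAt F V b).baseSet →
      ContMDiffAt I 𝓘(ℝ, EuclideanSpace ℝ (Fin n)) (⊤ : ℕ∞) (x b) q := by
    intro b q hq
    have h1 : ContMDiffAt I 𝓘(ℝ, EuclideanSpace ℝ (Fin n) →L[ℝ] EuclideanSpace ℝ (Fin (Module.finrank ℝ F))) (⊤ : ℕ∞) (Cm b) q := hCsm b q hq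
    have h2 : ContMDiffAt I 𝓘(ℝ, EuclideanSpace ℝ (Fin (Module.finrank ℝ F)) →L[ℝ] EuclideanSpace ℝ (Fin n)) (⊤ : ℕ∞)
        (fun y => ContinuousLinearMap.adjoint (Cm b y)) q := by
      have := (adjL.contMDiffAt).comp q h1
      exact this
    have h3 : ContMDiffAt I 𝓘(ℝ, EuclideanSpace ℝ (Fin (Module.finrank ℝ F)) →L[ℝ] EuclideanSpace ℝ (Fin (Module.finrank ℝ F))) (⊤ : ℕ∞)
        (fun y => (Cm b y) ∘L ContinuousLinearMap.adjoint (Cm b y)) q := h1.clm_comp h2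
    have h4 : ContMDiffAt I 𝓘(ℝ, EuclideanSpace ℝ (Fin (Module.finrank ℝ F)) →L[ℝ] EuclideanSpace ℝ (Fin (Module.finrank ℝ F))) (⊤ : ℕ∞)
        (fun y => Ring.inverse ((Cm b y) ∘L ContinuousLinearMap.adjoint (Cm b y))) q := by
      obtain ⟨u, hu'⟩ := Stmt19Aux.isUnit_comp_adjoint (Cm b q) (hsurj b q hq)
      have h5 : ContMDiffAt 𝓘(ℝ, EuclideanSpace ℝ (Fin (Module.finrank ℝ F)) →L[ℝ] EuclideanSpace ℝ (Fin (Module.finrank ℝ F))) 𝓘(ℝ, EuclideanSpace ℝ (Fin (Module.finrank ℝ F)) →L[ℝ] EuclideanSpace ℝ (Fin (Module.finrank ℝ F))) (⊤ : ℕ∞)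
          (Ring.inverse : (EuclideanSpace ℝ (Fin (Module.finrank ℝ F)) →L[ℝ] EuclideanSpace ℝ (Fin (Module.finrank ℝ F))) → (EuclideanSpace ℝ (Fin (Module.finrank ℝ F)) →L[ℝ] EuclideanSpace ℝ (Fin (Module.finrank ℝ F))))
          ((Cm b q) ∘L ContinuousLinearMap.adjoint (Cm b q)) := by
        rw [← hu']
        exact (contDiffAt_ringInverse ℝ u).contMDiffAt
      exact h5.comp q h3
    have h6 : ContMDiffAt I 𝓘(ℝ, EuclideanSpace ℝ (Fin (Module.finrank ℝ F))) (⊤ : ℕ∞)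
        (fun y => Ring.inverse ((Cm b y) ∘L ContinuousLinearMap.adjoint (Cm b y)) (vg b y)) q :=
      h4.clm_apply (hvsm b q hq)
    exact h2.clm_apply h6
  -- conclusion
  refine ⟨fun i q => x q q i, ?_, ?_⟩
  · intro i q0
    have hq0 : q0 ∈ (trivializationAt F V q0).baseSet :=
      FiberBundle.mem_baseSet_trivializationAt F V q0
    have hev : (fun q => x q q) =ᶠ[nhds q0] (x q0) := by
      filter_upwards [(trivializationAt F V q0).open_baseSet.mem_nhds hq0] with q hq
      exact hglue q0 q hq
    have hsm : ContMDiffAt I 𝓘(ℝ, EuclideanSpace ℝ (Fin n)) (⊤ : ℕ∞) (fun q => x q q) q0 :=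
      (hxsm q0 q0 hq0).congr_of_eventuallyEq hev
    exact ((EuclideanSpace.proj (𝕜 := ℝ) i).contMDiffAt).comp q0 hsm
  · intro q
    have hq : q ∈ (trivializationAt F V q).baseSet :=
      FiberBundle.mem_baseSet_trivializationAt F V q
    exact (hsol1 q q hq).symm
end
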